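/- Let $g:\mathbb{R}\to\mathbb{R}^d$ be $C^2$ and let $G:\mathbb{R}^d\times\mathbb{R}\to\mathbb{R}$ be $C^1$ and non-decreasing in its last variable $v$. Define $F(t,x,v)=G(x-g'(v)t,\,v)$ (the solution of $\partial_t F + g'(v)\cdot\nabla_x F=0$ with data $G$). Then $F(t,x,\cdot)$ is non-decreasing in $v$ for all $t\ge 0$ and all $x$ if and only if $g''(v)\cdot \nabla_x G(x,v)\le 0$ for all $(x,v)$. -/

import Mathlib

open Real Set Filter Topology

lemma aux_deriv_nonpos {f : ℝ → ℝ} {c x : ℝ} (hf : HasDerivAt f c x)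
    (h : ∀ y, x < y → f y ≤ f x) : c ≤ 0 := by
  have hs : Tendsto (slope f x) (𝓝[>] x) (𝓝 c) :=
    (hasDerivAt_iff_tendsto_slope.mp hf).mono_left (nhdsWithin_mono x fun y hy => ne_of_gt hy)
  refine le_of_tendsto hs ?_
  filter_upwards [self_mem_nhdsWithin] with y hy
  have hy' : x < y := hy
  have h1 : f y - f x ≤ 0 := sub_nonpos.mpr (h y hy')
  have : (y - x)⁻¹ * (f y - f x) ≤ 0 :=
    mul_nonpos_of_nonneg_of_nonpos (inv_nonneg.mpr (sub_nonneg.mpr hy'.le)) h1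
  simpa [slope, div_eq_inv_mul] using this

lemma aux_deriv_nonneg {f : ℝ → ℝ} {c x : ℝ} (hf : HasDerivAt f c x)
    (h : ∀ y, x ≤ y → f x ≤ f y) : 0 ≤ c := by
  have := aux_deriv_nonpos hf.neg (fun y hy => neg_le_neg (h y hy.le))
  linarith

local notation "E" => EuclideanSpace ℝ (Fin _)

theorem stmt_0 {d : ℕ}
    (g : ℝ → EuclideanSpace ℝ (Fin d)) (hg : ContDiff ℝ 2 g)
    (G : EuclideanSpace ℝ (Fin d) × ℝ → ℝ) (hG : ContDiff ℝ 1 G)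
    (hGmono : ∀ x : EuclideanSpace ℝ (Fin d), Monotone fun v => G (x, v))
    (gradG : EuclideanSpace ℝ (Fin d) → ℝ → EuclideanSpace ℝ (Fin d))
    (hgrad : ∀ x v, HasGradientAt (fun y => G (y, v)) (gradG x v) x) :
    (∀ t : ℝ, 0 ≤ t → ∀ x : EuclideanSpace ℝ (Fin d),
        Monotone fun v => G (x - t • deriv g v, v)) ↔
      ∀ (x : EuclideanSpace ℝ (Fin d)) (v : ℝ),
        (inner ℝ (deriv (deriv g) v) (gradG x v) : ℝ) ≤ 0 := by
  have hGd : Differentiable ℝ G := hG.differentiable one_ne_zero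
  have hg1 : ContDiff ℝ 1 (deriv g) := by
    have h2 : ContDiff ℝ ((1 : ℕ) + 1) g := by exact_mod_cast hg
    exact (contDiff_succ_iff_deriv.mp h2).2.2
  have hgd : Differentiable ℝ (deriv g) := hg1.differentiable one_ne_zero
  -- fact A : horizontal directional derivative is inner product with gradient
  have factA : ∀ (p : EuclideanSpace ℝ (Fin d) × ℝ) (a : EuclideanSpace ℝ (Fin d)),
      fderiv ℝ G p ((a, 0) : EuclideanSpace ℝ (Fin d) × ℝ) = (inner ℝ (gradG p.1 p.2) a : ℝ) := by
    intro p a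
    have h1 : HasFDerivAt (fun y : EuclideanSpace ℝ (Fin d) => G (y, p.2))
        ((fderiv ℝ G p).comp
          (((ContinuousLinearMap.id ℝ (EuclideanSpace ℝ (Fin d))).prod 0))) p.1 := by
      have := (hGd (p.1, p.2)).hasFDerivAt.comp p.1
        ((hasFDerivAt_id (𝕜 := ℝ) p.1).prodMk (hasFDerivAt_const p.2 p.1))
      simpa [Function.comp_def] using this
    have h2 : HasFDerivAt (fun y : EuclideanSpace ℝ (Fin d) => G (y, p.2))
        (InnerProductSpace.toDual ℝ _ (gradG p.1 p.2)) p.1 :=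
      hasGradientAt_iff_hasFDerivAt.mp (hgrad p.1 p.2)
    have h3 := ContinuousLinearMap.ext_iff.mp (h1.unique h2) a
    simpa [InnerProductSpace.toDual_apply_apply] using h3
  -- fact B : vertical partial derivative is nonnegative
  have factB : ∀ p : EuclideanSpace ℝ (Fin d) × ℝ,
      0 ≤ fderiv ℝ G p ((0, 1) : EuclideanSpace ℝ (Fin d) × ℝ) := by
    intro p
    have h3 : HasDerivAt (fun w => G (p.1, w))
        (fderiv ℝ G p ((0, 1) : EuclideanSpace ℝ (Fin d) × ℝ)) p.2 := by
      have := (hGd (p.1, p.2)).hasFDerivAt.comp_hasDerivAt p.2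
        ((hasDerivAt_const p.2 p.1).prodMk (hasDerivAt_id p.2))
      simpa [Function.comp_def] using this
    exact aux_deriv_nonneg h3 (fun y hy => hGmono p.1 hy)
  constructor
  · -- forward
    intro hyp x₀ v
    set w := deriv (deriv g) v with hw
    have hg'' : HasDerivAt (deriv g) w v := (hgd v).hasDerivAt
    have step1 : ∀ τ : ℝ, 0 < τ → G (x₀ + τ • w, v) ≤ G (x₀, v) := by
      intro τ hτ
      have hF1 : Tendsto (fun h : ℝ => G (x₀ + τ • (h⁻¹ • (deriv g (v + h) - deriv g v)), v))
          (𝓝[>] (0:ℝ)) (𝓝 (G (x₀ + τ • w, v))) := by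
        have h1 : Tendsto (fun h : ℝ => h⁻¹ • (deriv g (v + h) - deriv g v))
            (𝓝[>] (0:ℝ)) (𝓝 w) := hg''.tendsto_slope_zero_right
        have h2 : Tendsto (fun h : ℝ =>
            ((x₀ + τ • (h⁻¹ • (deriv g (v + h) - deriv g v)), v) :
              EuclideanSpace ℝ (Fin d) × ℝ))
            (𝓝[>] (0:ℝ)) (𝓝 (x₀ + τ • w, v)) :=
          (tendsto_const_nhds.add (h1.const_smul τ)).prodMk_nhds tendsto_const_nhds
        simpa [Function.comp_def] using (hG.continuous.tendsto _).comp h2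
      have hF2 : Tendsto (fun h : ℝ => G (x₀, v + h)) (𝓝[>] (0:ℝ)) (𝓝 (G (x₀, v))) := by
        have hv : Tendsto (fun h : ℝ => v + h) (𝓝[>] (0:ℝ)) (𝓝 v) := by
          have h0 : Tendsto (fun h : ℝ => v + h) (𝓝 (0:ℝ)) (𝓝 v) := by
            simpa [Pi.add_def] using (continuous_const.add continuous_id).tendsto (0:ℝ)
          exact h0.mono_left nhdsWithin_le_nhds
        have h2 : Tendsto (fun h : ℝ =>
            ((x₀, v + h) : EuclideanSpace ℝ (Fin d) × ℝ)) (𝓝[>] (0:ℝ)) (𝓝 (x₀, v)) :=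
          tendsto_const_nhds.prodMk_nhds hv
        simpa [Function.comp_def] using (hG.continuous.tendsto _).comp h2
      refine le_of_tendsto_of_tendsto hF1 hF2 ?_
      filter_upwards [self_mem_nhdsWithin] with h hh
      have hh' : (0:ℝ) < h := hh
      have hmono := hyp (τ / h) (le_of_lt (div_pos hτ hh')) (x₀ + (τ / h) • deriv g (v + h))
      have hle := hmono (le_of_lt (lt_add_of_pos_right v hh'))
      simp only at hle
      have harg : x₀ + (τ / h) • deriv g (v + h) - (τ / h) • deriv g v
          = x₀ + τ • (h⁻¹ • (deriv g (v + h) - deriv g v)) := by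
        rw [smul_smul, smul_sub, div_eq_mul_inv]
        abel
      have harg2 : x₀ + (τ / h) • deriv g (v + h) - (τ / h) • deriv g (v + h) = x₀ := by
        abel
      rw [harg, harg2] at hle
      exact hle
    have hu : HasDerivAt (fun τ : ℝ => G (x₀ + τ • w, v)) (inner ℝ (gradG x₀ v) w : ℝ) 0 := by
      have hin : HasDerivAt (fun τ : ℝ => x₀ + τ • w) w 0 := by
        simpa [Pi.add_def] using (hasDerivAt_const (0:ℝ) x₀).add ((hasDerivAt_id (0:ℝ)).smul_const w)
      have hF : HasFDerivAt (fun y : EuclideanSpace ℝ (Fin d) => G (y, v))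
          (InnerProductSpace.toDual ℝ _ (gradG x₀ v)) ((fun τ : ℝ => x₀ + τ • w) 0) := by
        simpa using hasGradientAt_iff_hasFDerivAt.mp (hgrad x₀ v)
      have := hF.comp_hasDerivAt 0 hin
      simpa [Function.comp_def, InnerProductSpace.toDual_apply_apply] using this
    have hle : (inner ℝ (gradG x₀ v) w : ℝ) ≤ 0 := by
      refine aux_deriv_nonpos hu ?_
      intro τ hτ
      simpa using step1 τ hτ
    calc (inner ℝ (deriv (deriv g) v) (gradG x₀ v) : ℝ)
        = (inner ℝ (gradG x₀ v) w : ℝ) := real_inner_comm _ _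
      _ ≤ 0 := hle
  · -- backward
    intro hyp t ht x
    have key : ∀ v : ℝ, HasDerivAt (fun v => G (x - t • deriv g v, v))
        (fderiv ℝ G (x - t • deriv g v, v)
          ((-(t • deriv (deriv g) v), 1) : EuclideanSpace ℝ (Fin d) × ℝ)) v := by
      intro v
      have h1 : HasDerivAt (fun v : ℝ => x - t • deriv g v) (-(t • deriv (deriv g) v)) v := by
        simpa [Pi.sub_def, Pi.smul_def] using (hasDerivAt_const v x).sub (((hgd v).hasDerivAt).const_smul t)
      have hin : HasDerivAt (fun v : ℝ =>
          ((x - t • deriv g v, v) : EuclideanSpace ℝ (Fin d) × ℝ))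
          ((-(t • deriv (deriv g) v), 1) : EuclideanSpace ℝ (Fin d) × ℝ) v :=
        h1.prodMk (hasDerivAt_id v)
      have := (hGd _).hasFDerivAt.comp_hasDerivAt v hin
      simpa [Function.comp_def] using this
    have hdiff : Differentiable ℝ (fun v => G (x - t • deriv g v, v)) :=
      fun v => (key v).differentiableAt
    refine monotone_of_deriv_nonneg hdiff ?_
    intro v
    rw [(key v).deriv]
    have hsplit : ((-(t • deriv (deriv g) v), 1) : EuclideanSpace ℝ (Fin d) × ℝ)
        = ((-(t • deriv (deriv g) v), 0) : EuclideanSpace ℝ (Fin d) × ℝ)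
          + ((0, 1) : EuclideanSpace ℝ (Fin d) × ℝ) := by
      simp [Prod.ext_iff]
    rw [hsplit, map_add]
    have hA : fderiv ℝ G (x - t • deriv g v, v)
        ((-(t • deriv (deriv g) v), 0) : EuclideanSpace ℝ (Fin d) × ℝ)
        = -(t * (inner ℝ (gradG (x - t • deriv g v) v) (deriv (deriv g) v) : ℝ)) := by
      rw [factA (x - t • deriv g v, v)]
      rw [inner_neg_right, real_inner_smul_right]
    have hA' : 0 ≤ fderiv ℝ G (x - t • deriv g v, v)
        ((-(t • deriv (deriv g) v), 0) : EuclideanSpace ℝ (Fin d) × ℝ) := by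
      rw [hA]
      have h2 := hyp (x - t • deriv g v) v
      have hcomm : (inner ℝ (gradG (x - t • deriv g v) v) (deriv (deriv g) v) : ℝ)
          = (inner ℝ (deriv (deriv g) v) (gradG (x - t • deriv g v) v) : ℝ) :=
        real_inner_comm _ _
      rw [hcomm]
      nlinarith
    have hB := factB (x - t • deriv g v, v)
    linarith
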